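/- If for every finite Λ ⊂ Z^d and every configuration ω' the finite-volume conditional probabilities μ(ω'_Λ | ω'_{Δ \ Λ}) converge, as Δ ↑ Z^d along a cofinal sequence, uniformly (over compatible boundary conditions) to a limit kernel γ_Λ(ω'_Λ | ω'_{Λ^c}), then γ satisfies the DLR equations for μ: ∫ μ(dω') γ_Λ(ω'_Λ | ω') = μ(ω'_Λ). (Martingale/L¹-convergence argument via Lévy's zero-one law.) -/

import Mathlib

open scoped BigOperators

/-- Sites of the lattice `ℤ^d`. -/
abbrev Site (d : ℕ) := Fin d → ℤ

/-- Nearest-neighbor relation: `ℓ¹`-distance one. -/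
def adj {d : ℕ} (x y : Site d) : Prop := (∑ i, |x i - y i|) = 1

open Classical in
/-- The projection to non-isolates: `(Tω)_x = ω_x (1 - ∏_{y ∈ ∂x} (1 - ω_y))`,
i.e. a site stays occupied iff it is occupied and has an occupied neighbor. -/
noncomputable def T {d : ℕ} (ω : Site d → Bool) : Site d → Bool :=
  fun x => ω x && (if ∃ y, adj x y ∧ ω y = true then true else false)


open MeasureTheory Filter Set

/-- if the finite-volume conditional probabilities
`μ(ω'_Λ | ω'_{Δ_n \ Λ})` converge, as `Δ_n ↑ ℤ^d` along a cofinal monotone sequence,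
uniformly over (compatible, i.e. positive-probability) boundary conditions to a limit
kernel `γ`, then `γ` satisfies the DLR equation for `μ`:
`∫ γ_Λ(ζ | ω') μ(dω') = μ({ω'_Λ = ζ})`. -/
theorem dlr_from_uniform_limit {d : ℕ}
    (μ : Measure (Site d → Bool)) [IsProbabilityMeasure μ]
    (Λ : Finset (Site d)) (Δ : ℕ → Finset (Site d))
    (hmono : Monotone Δ) (hcof : ∀ x : Site d, ∃ n, x ∈ Δ n) (hΛ : ∀ n, Λ ⊆ Δ n)
    (γ : (Site d → Bool) → (Site d → Bool) → ℝ)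
    (hγmeas : ∀ ζ, Measurable (γ ζ))
    (ε : ℕ → ℝ) (hε : Tendsto ε atTop (nhds 0))
    (hconv : ∀ (n : ℕ) (ζ ω : Site d → Bool),
      μ {σ | ∀ i ∈ Δ n \ Λ, σ i = ω i} ≠ 0 →
      |(μ {σ | (∀ i ∈ Λ, σ i = ζ i) ∧ ∀ i ∈ Δ n \ Λ, σ i = ω i}).toReal /
          (μ {σ | ∀ i ∈ Δ n \ Λ, σ i = ω i}).toReal - γ ζ ω| ≤ ε n) :
    ∀ ζ : Site d → Bool, ∫ ω, γ ζ ω ∂μ = (μ {σ | ∀ i ∈ Λ, σ i = ζ i}).toReal := by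
  classical
  intro ζ
  set A : Set (Site d → Bool) := {σ | ∀ i ∈ Λ, σ i = ζ i} with hA
  have hAmeas : MeasurableSet A := by
    have : A = ⋂ i ∈ (Λ : Set (Site d)), (fun σ : Site d → Bool => σ i) ⁻¹' {ζ i} := by
      ext σ; simp [hA]
    rw [this]
    exact MeasurableSet.biInter (Λ : Set (Site d)).to_countable
      fun i _ => (measurable_pi_apply i) (measurableSet_singleton _)
  have key : ∀ n, |∫ ω, γ ζ ω ∂μ - (μ A).toReal| ≤ ε n := by
    intro n
    set S := Δ n \ Λ with hS
    let ι := {x : Site d // x ∈ S}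
    let r : (Site d → Bool) → (ι → Bool) := fun σ i => σ i
    have hr : Measurable r := measurable_pi_lambda _ fun i => measurable_pi_apply _
    let B : (ι → Bool) → Set (Site d → Bool) := fun η => r ⁻¹' {η}
    have hBmeas : ∀ η, MeasurableSet (B η) := fun η => hr (measurableSet_singleton η)
    have hmemB : ∀ ω, ω ∈ B (r ω) := fun ω => rfl
    have hmemB' : ∀ {ω η}, ω ∈ B η → r ω = η := by
      intro ω η h; simpa [B] using h
    have hBr : ∀ ω, B (r ω) = {σ | ∀ i ∈ Δ n \ Λ, σ i = ω i} := by
      intro ω; ext σ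
      simp only [B, r, mem_preimage, mem_singleton_iff, funext_iff, mem_setOf_eq]
      constructor
      · intro h i hi; exact h ⟨i, hi⟩
      · intro h x; exact h x x.2
    have hABr : ∀ ω, A ∩ B (r ω)
        = {σ | (∀ i ∈ Λ, σ i = ζ i) ∧ ∀ i ∈ Δ n \ Λ, σ i = ω i} := by
      intro ω; rw [hBr]; ext σ; simp [hA, mem_inter_iff]
    let c : (ι → Bool) → ℝ := fun η => (μ (A ∩ B η)).toReal / (μ (B η)).toReal
    let g : (Site d → Bool) → ℝ := fun ω => c (r ω)
    have hc_bdd : ∀ η, |c η| ≤ 1 := by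
      intro η
      by_cases hz : μ (B η) = 0
      · have h0 : μ (A ∩ B η) = 0 := measure_mono_null inter_subset_right hz
        simp [c, hz, h0]
      · have hpos : 0 < (μ (B η)).toReal :=
          ENNReal.toReal_pos hz (measure_ne_top μ _)
        have hle : (μ (A ∩ B η)).toReal ≤ (μ (B η)).toReal :=
          ENNReal.toReal_mono (measure_ne_top μ _) (measure_mono inter_subset_right)
        rw [abs_of_nonneg (div_nonneg ENNReal.toReal_nonneg ENNReal.toReal_nonneg)]
        exact (div_le_one hpos).2 hle
    have hgsum : ∀ ω, g ω = ∑ η : ι → Bool, (B η).indicator (fun _ => c η) ω := by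
      intro ω
      rw [Finset.sum_eq_single (r ω)]
      · simp [indicator_of_mem (hmemB ω)]; rfl
      · intro η _ hne
        exact indicator_of_notMem (fun h => hne ((hmemB' h).symm ▸ rfl)) _
      · intro h; exact absurd (Finset.mem_univ _) h
    have hgint : Integrable g μ := by
      have : g = fun ω => ∑ η : ι → Bool, (B η).indicator (fun _ => c η) ω :=
        funext hgsum
      rw [this]
      exact integrable_finset_sum _ fun η _ => (integrable_const _).indicator (hBmeas η)
    have hgint_eq : ∫ ω, g ω ∂μ = (μ A).toReal := by
      have h1 : ∫ ω, g ω ∂μ = ∑ η : ι → Bool, (μ (B η)).toReal • c η := by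
        simp only [funext hgsum]
        rw [integral_finset_sum _ fun η _ => (integrable_const _).indicator (hBmeas η)]
        exact Finset.sum_congr rfl fun η _ => integral_indicator_const _ (hBmeas η)
      have h2 : ∀ η : ι → Bool, (μ (B η)).toReal • c η = (μ (A ∩ B η)).toReal := by
        intro η
        by_cases hz : μ (B η) = 0
        · have h0 : μ (A ∩ B η) = 0 := measure_mono_null inter_subset_right hz
          simp [c, hz, h0]
        · have hne : (μ (B η)).toReal ≠ 0 :=
            (ENNReal.toReal_pos hz (measure_ne_top μ _)).ne'
          simp only [c, smul_eq_mul]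
          field_simp
        -- measure decomposition
      have hdisj : Pairwise (Function.onFun Disjoint fun η => A ∩ B η) := by
        intro a b hab
        refine Set.disjoint_left.2 ?_
        rintro σ ⟨_, hsa⟩ ⟨_, hsb⟩
        exact hab ((hmemB' hsa).symm.trans (hmemB' hsb))
      have hcover : (⋃ η : ι → Bool, (A ∩ B η)) = A := by
        ext σ
        constructor
        · rintro ⟨s, ⟨η, rfl⟩, hσA, _⟩
          exact hσA
        · intro hσ
          exact mem_iUnion.2 ⟨r σ, hσ, hmemB σ⟩
      have h3 : μ A = ∑ η : ι → Bool, μ (A ∩ B η) := by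
        conv_lhs => rw [← hcover]
        rw [measure_iUnion hdisj fun η => hAmeas.inter (hBmeas η), tsum_fintype]
      rw [h1, Finset.sum_congr rfl fun η _ => h2 η, h3,
        ENNReal.toReal_sum fun η _ => measure_ne_top μ _]
    have hnull : μ {ω | μ (B (r ω)) = 0} = 0 := by
      have hsub : {ω | μ (B (r ω)) = 0} ⊆ ⋃ η ∈ {η : ι → Bool | μ (B η) = 0}, B η := by
        intro ω hω
        exact mem_biUnion hω (hmemB ω)
      refine measure_mono_null hsub ?_
      exact (measure_biUnion_null_iff (Set.to_countable _)).2 fun η hη => hη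
    have hae : ∀ᵐ ω ∂μ, |g ω - γ ζ ω| ≤ ε n := by
      have hane : ∀ᵐ ω ∂μ, μ (B (r ω)) ≠ 0 := by
        rw [ae_iff]; simpa using hnull
      filter_upwards [hane] with ω hω
      have hb := hconv n ζ ω (by rw [← hBr ω]; exact hω)
      rw [← hABr ω, ← hBr ω] at hb
      exact hb
    have hγint : Integrable (γ ζ) μ := by
      refine Integrable.mono' (integrable_const (1 + |ε n|))
        (hγmeas ζ).aestronglyMeasurable ?_
      filter_upwards [hae] with ω hω
      have h1 : |γ ζ ω| ≤ |g ω| + |g ω - γ ζ ω| := by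
        have := abs_sub_abs_le_abs_sub (g ω) (γ ζ ω)
        have h2 := abs_sub (g ω) (γ ζ ω)
        calc |γ ζ ω| = |g ω - (g ω - γ ζ ω)| := by ring_nf
          _ ≤ |g ω| + |g ω - γ ζ ω| := abs_sub _ _
      calc ‖γ ζ ω‖ = |γ ζ ω| := rfl
        _ ≤ |g ω| + |g ω - γ ζ ω| := h1
        _ ≤ 1 + |ε n| := add_le_add (hc_bdd (r ω)) (by
            calc |g ω - γ ζ ω| ≤ ε n := hω
              _ ≤ |ε n| := le_abs_self _)
    have hsub : ∫ ω, γ ζ ω ∂μ - (μ A).toReal = ∫ ω, (γ ζ ω - g ω) ∂μ := by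
      rw [integral_sub hγint hgint, hgint_eq]
    rw [hsub]
    have hbound : ∀ᵐ ω ∂μ, ‖γ ζ ω - g ω‖ ≤ ε n := by
      filter_upwards [hae] with ω hω
      rw [Real.norm_eq_abs, abs_sub_comm]
      exact hω
    calc |∫ ω, (γ ζ ω - g ω) ∂μ| = ‖∫ ω, (γ ζ ω - g ω) ∂μ‖ := rfl
      _ ≤ ε n * (μ Set.univ).toReal := norm_integral_le_of_norm_le_const hbound
      _ = ε n := by simp
  have h0 : |∫ ω, γ ζ ω ∂μ - (μ A).toReal| ≤ 0 := ge_of_tendsto' hε key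
  have := abs_nonneg (∫ ω, γ ζ ω ∂μ - (μ A).toReal)
  have heq : |∫ ω, γ ζ ω ∂μ - (μ A).toReal| = 0 := le_antisymm h0 this
  have := abs_eq_zero.1 heq
  linarith
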